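/- Key concatenation step in the proof of Lemma 1: let π be a joint trajectory of length n, let 0 ≤ n' ≤ n, and suppose σ' is a unilateral deviation of robot i in the length-n' prefix of π with strictly smaller prefix cost, i.e. ∑_{t<n'} c i ((π[i ↦ σ']) t) ((π[i ↦ σ']) (t+1)) < ∑_{t<n'} c i (π t) (π (t+1)). Then the map σ : Fin (n+1) → S i defined by σ t = σ' t for t ≤ n' and σ t = π t i for t > n' is a unilateral deviation of robot i in π (it is well defined since σ' n' = π n' i, respects the adjacency relation Adj i, yields collision-free transitions, and has the same start and terminal states as π's i-th component), and it satisfies J i (π[i ↦ σ]) < J i (π). -/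

import Mathlib

/-- The modified joint trajectory `π[i ↦ σ]`, obtained by replacing robot `i`'s
component by `σ` and keeping all other robots' components of `π`. -/
def replaceComp {m : ℕ} {S : Fin m → Type*} {n : ℕ}
    (π : Fin (n + 1) → ∀ j, S j) (i : Fin m) (σ : Fin (n + 1) → S i) :
    Fin (n + 1) → ∀ j, S j :=
  fun t => Function.update (π t) i (σ t)

/-- `π` is a joint trajectory of length `n`: every step respects each robot's
adjacency relation and every transition is collision-free. -/
def IsTraj {m : ℕ} {S : Fin m → Type*} (Adj : ∀ i, S i → S i → Prop)
    (Free : (∀ j, S j) → (∀ j, S j) → Prop) {n : ℕ}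
    (π : Fin (n + 1) → ∀ j, S j) : Prop :=
  (∀ t : Fin n, ∀ i, Adj i (π t.castSucc i) (π t.succ i)) ∧
  ∀ t : Fin n, Free (π t.castSucc) (π t.succ)

/-- Total cost of a length-`n` joint trajectory for the edge stage cost `c`. -/
def trajCost {m : ℕ} {S : Fin m → Type*}
    (c : (∀ j, S j) → (∀ j, S j) → ℝ) {n : ℕ}
    (π : Fin (n + 1) → ∀ j, S j) : ℝ :=
  ∑ t : Fin n, c (π t.castSucc) (π t.succ)

/-- `σ` is a unilateral deviation of robot `i` in the length-`n` joint
trajectory `π`. -/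
def IsDeviation {m : ℕ} {S : Fin m → Type*} (Adj : ∀ i, S i → S i → Prop)
    (Free : (∀ j, S j) → (∀ j, S j) → Prop) {n : ℕ}
    (π : Fin (n + 1) → ∀ j, S j) (i : Fin m) (σ : Fin (n + 1) → S i) : Prop :=
  σ 0 = π 0 i ∧ σ (Fin.last n) = π (Fin.last n) i ∧
  (∀ t : Fin n, Adj i (σ t.castSucc) (σ t.succ)) ∧
  ∀ t : Fin n, Free (replaceComp π i σ t.castSucc) (replaceComp π i σ t.succ)

/-- `π` is a graph Nash equilibrium: `π` is a joint trajectory, and no robot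
can reduce its cost by a unilateral deviation. -/
def IsGNE {m : ℕ} {S : Fin m → Type*} (Adj : ∀ i, S i → S i → Prop)
    (Free : (∀ j, S j) → (∀ j, S j) → Prop)
    (c : ∀ _ : Fin m, (∀ j, S j) → (∀ j, S j) → ℝ) {n : ℕ}
    (π : Fin (n + 1) → ∀ j, S j) : Prop :=
  IsTraj Adj Free π ∧
  ∀ (i : Fin m) (σ : Fin (n + 1) → S i), IsDeviation Adj Free π i σ →
    trajCost (c i) π ≤ trajCost (c i) (replaceComp π i σ)

/-- **Key concatenation step in the proof of Lemma 1**: if `σ'` is a unilateral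
deviation of robot `i` in the length-`n'` prefix of a joint trajectory `π` of
length `n` with strictly smaller prefix cost, then the map `σ` defined by
`σ t = σ' t` for `t ≤ n'` and `σ t = π t i` for `t > n'` is a unilateral
deviation of robot `i` in `π`, and it satisfies `Jⁱ(π[i ↦ σ]) < Jⁱ(π)`. -/
theorem deviation_concat {m : ℕ} (hm : 1 ≤ m) {S : Fin m → Type*}
    (Adj : ∀ i, S i → S i → Prop)
    (Free : (∀ j, S j) → (∀ j, S j) → Prop)
    (c : ∀ _ : Fin m, (∀ j, S j) → (∀ j, S j) → ℝ)
    {n : ℕ} (π : Fin (n + 1) → ∀ j, S j)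
    (hπ : IsTraj Adj Free π)
    (n' : ℕ) (hn' : n' ≤ n) (i : Fin m)
    (σ' : Fin (n' + 1) → S i)
    (hdev : IsDeviation Adj Free
      (fun t : Fin (n' + 1) => π (t.castLE (Nat.succ_le_succ hn'))) i σ')
    (hlt : trajCost (c i)
        (replaceComp (fun t : Fin (n' + 1) => π (t.castLE (Nat.succ_le_succ hn'))) i σ')
      < trajCost (c i)
        (fun t : Fin (n' + 1) => π (t.castLE (Nat.succ_le_succ hn')))) :
    IsDeviation Adj Free π i
      (fun t : Fin (n + 1) =>
        if h : (t : ℕ) ≤ n' then σ' ⟨t, Nat.lt_succ_of_le h⟩ else π t i) ∧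
    trajCost (c i)
      (replaceComp π i (fun t : Fin (n + 1) =>
        if h : (t : ℕ) ≤ n' then σ' ⟨t, Nat.lt_succ_of_le h⟩ else π t i))
      < trajCost (c i) π := by
  obtain ⟨hadj, hfree⟩ := hπ
  obtain ⟨hd0, hdlast, hdadj, hdfree⟩ := hdev
  set τ : Fin (n' + 1) → ∀ j, S j :=
    fun t : Fin (n' + 1) => π (t.castLE (Nat.succ_le_succ hn')) with hτ
  set σ : Fin (n + 1) → S i :=
    fun t => if h : (t : ℕ) ≤ n' then σ' ⟨t, Nat.lt_succ_of_le h⟩ else π t i with hσ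
  have hσhigh : ∀ t : Fin (n + 1), n' ≤ (t : ℕ) → σ t = π t i := by
    intro t ht
    simp only [hσ]
    split_ifs with h
    · have htv : (t : ℕ) = n' := le_antisymm h ht
      have h1 : (⟨(t : ℕ), Nat.lt_succ_of_le h⟩ : Fin (n' + 1)) = Fin.last n' := by
        ext; simpa using htv
      rw [h1, hdlast]
      have h2 : (Fin.last n').castLE (Nat.succ_le_succ hn') = t := by
        ext; simpa using htv.symm
      simp only [hτ, h2]
    · rfl
  have hσlow : ∀ (t : Fin (n + 1)) (h : (t : ℕ) ≤ n'),
      σ t = σ' ⟨t, Nat.lt_succ_of_le h⟩ := by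
    intro t h; simp only [hσ]; rw [dif_pos h]
  have hπlow : ∀ (t : Fin (n + 1)) (h : (t : ℕ) ≤ n'),
      π t = τ ⟨t, Nat.lt_succ_of_le h⟩ := by
    intro t h; simp only [hτ]; congr 1
  have hρhigh : ∀ t : Fin (n + 1), n' ≤ (t : ℕ) → replaceComp π i σ t = π t := by
    intro t ht
    simp only [replaceComp, hσhigh t ht, Function.update_eq_self]
  have hρlow : ∀ (t : Fin (n + 1)) (h : (t : ℕ) ≤ n'),
      replaceComp π i σ t = replaceComp τ i σ' ⟨t, Nat.lt_succ_of_le h⟩ := by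
    intro t h
    simp only [replaceComp, hσlow t h]
    rw [hπlow t h]
  have hdev2 : IsDeviation Adj Free π i σ := by
    refine ⟨?_, ?_, ?_, ?_⟩
    · rw [hσlow 0 (Nat.zero_le n')]
      have h0 : (⟨((0 : Fin (n + 1)) : ℕ), Nat.lt_succ_of_le (Nat.zero_le n')⟩ :
          Fin (n' + 1)) = 0 := by ext; rfl
      rw [h0, hd0]
      simp only [hτ]
      congr 1
    · exact hσhigh (Fin.last n) (by simpa using hn')
    · intro t
      rcases lt_or_ge (t : ℕ) n' with h | h
      · rw [hσlow t.castSucc (le_of_lt h), hσlow t.succ h]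
        exact hdadj ⟨(t : ℕ), h⟩
      · rw [hσhigh t.castSucc h, hσhigh t.succ (le_of_lt (Nat.lt_succ_of_le h))]
        exact hadj t i
    · intro t
      rcases lt_or_ge (t : ℕ) n' with h | h
      · rw [hρlow t.castSucc (le_of_lt h), hρlow t.succ h]
        exact hdfree ⟨(t : ℕ), h⟩
      · rw [hρhigh t.castSucc h, hρhigh t.succ (le_of_lt (Nat.lt_succ_of_le h))]
        exact hfree t
  refine ⟨hdev2, ?_⟩
  -- cost comparison
  set ρ : Fin (n + 1) → ∀ j, S j := replaceComp π i σ with hρ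
  set ρ' : Fin (n' + 1) → ∀ j, S j := replaceComp τ i σ' with hρ'
  set g : ℕ → ℝ := fun t =>
    if h : t < n then c i (ρ ⟨t, Nat.lt_succ_of_lt h⟩) (ρ ⟨t + 1, Nat.succ_lt_succ h⟩)
    else 0 with hg
  set gπ : ℕ → ℝ := fun t =>
    if h : t < n then c i (π ⟨t, Nat.lt_succ_of_lt h⟩) (π ⟨t + 1, Nat.succ_lt_succ h⟩)
    else 0 with hgπ
  set g' : ℕ → ℝ := fun t =>
    if h : t < n' then c i (ρ' ⟨t, Nat.lt_succ_of_lt h⟩) (ρ' ⟨t + 1, Nat.succ_lt_succ h⟩)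
    else 0 with hg'
  set gτ : ℕ → ℝ := fun t =>
    if h : t < n' then c i (τ ⟨t, Nat.lt_succ_of_lt h⟩) (τ ⟨t + 1, Nat.succ_lt_succ h⟩)
    else 0 with hgτ
  have hcρ : trajCost (c i) ρ = ∑ t ∈ Finset.range n, g t := by
    rw [← Fin.sum_univ_eq_sum_range]
    refine Finset.sum_congr rfl fun t _ => ?_
    simp only [hg]
    rw [dif_pos t.isLt]
    rfl
  have hcπ : trajCost (c i) π = ∑ t ∈ Finset.range n, gπ t := by
    rw [← Fin.sum_univ_eq_sum_range]
    refine Finset.sum_congr rfl fun t _ => ?_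
    simp only [hgπ]
    rw [dif_pos t.isLt]
    rfl
  have hcρ' : trajCost (c i) ρ' = ∑ t ∈ Finset.range n', g' t := by
    rw [← Fin.sum_univ_eq_sum_range]
    refine Finset.sum_congr rfl fun t _ => ?_
    simp only [hg']
    rw [dif_pos t.isLt]
    rfl
  have hcτ : trajCost (c i) τ = ∑ t ∈ Finset.range n', gτ t := by
    rw [← Fin.sum_univ_eq_sum_range]
    refine Finset.sum_congr rfl fun t _ => ?_
    simp only [hgτ]
    rw [dif_pos t.isLt]
    rfl
  have hsplitρ : ∑ t ∈ Finset.range n, g t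
      = ∑ t ∈ Finset.range n', g t + ∑ t ∈ Finset.Ico n' n, g t := by
    rw [Finset.range_eq_Ico, Finset.range_eq_Ico]
    exact (Finset.sum_Ico_consecutive _ (Nat.zero_le n') hn').symm
  have hsplitπ : ∑ t ∈ Finset.range n, gπ t
      = ∑ t ∈ Finset.range n', gπ t + ∑ t ∈ Finset.Ico n' n, gπ t := by
    rw [Finset.range_eq_Ico, Finset.range_eq_Ico]
    exact (Finset.sum_Ico_consecutive _ (Nat.zero_le n') hn').symm
  have hglow : ∀ t ∈ Finset.range n', g t = g' t := by
    intro t ht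
    rw [Finset.mem_range] at ht
    have htn : t < n := lt_of_lt_of_le ht hn'
    simp only [hg, hg']
    rw [dif_pos htn, dif_pos ht]
    rw [hρlow ⟨t, Nat.lt_succ_of_lt htn⟩ (le_of_lt ht),
      hρlow ⟨t + 1, Nat.succ_lt_succ htn⟩ ht]
  have hgπlow : ∀ t ∈ Finset.range n', gπ t = gτ t := by
    intro t ht
    rw [Finset.mem_range] at ht
    have htn : t < n := lt_of_lt_of_le ht hn'
    simp only [hgπ, hgτ]
    rw [dif_pos htn, dif_pos ht]
    rw [hπlow ⟨t, Nat.lt_succ_of_lt htn⟩ (le_of_lt ht),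
      hπlow ⟨t + 1, Nat.succ_lt_succ htn⟩ ht]
  have hghigh : ∀ t ∈ Finset.Ico n' n, g t = gπ t := by
    intro t ht
    rw [Finset.mem_Ico] at ht
    simp only [hg, hgπ]
    rw [dif_pos ht.2, dif_pos ht.2]
    rw [hρhigh ⟨t, Nat.lt_succ_of_lt ht.2⟩ ht.1,
      hρhigh ⟨t + 1, Nat.succ_lt_succ ht.2⟩ (le_of_lt (Nat.lt_succ_of_le ht.1))]
  calc trajCost (c i) ρ
      = ∑ t ∈ Finset.range n', g' t + ∑ t ∈ Finset.Ico n' n, gπ t := by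
        rw [hcρ, hsplitρ, Finset.sum_congr rfl hglow, Finset.sum_congr rfl hghigh]
    _ = trajCost (c i) ρ' + ∑ t ∈ Finset.Ico n' n, gπ t := by rw [hcρ']
    _ < trajCost (c i) τ + ∑ t ∈ Finset.Ico n' n, gπ t := by
        exact add_lt_add_left hlt _
    _ = trajCost (c i) π := by
        rw [hcτ, hcπ, hsplitπ, Finset.sum_congr rfl hgπlow]
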